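/- There exists a universal constant c > 0 such that for every integer r ≥ 2 there exists a family 𝓘 = {I_1, …, I_ℓ} with ℓ ≤ c · log r, satisfying: (1) each I_t ⊆ {1, …, r−1} is sparse; and (2) for all x, y ∈ {1, …, r−1} with |x − y| ≥ 4 and {x, y} ≠ {1, r−1}, there exists some t ∈ {1, …, ℓ} such that {x, y} ⊆ I_t. -/

import Mathlib

def SparseSet (r : ℕ) (I : Finset ℕ) : Prop :=
  I ⊆ Finset.Icc 1 (r - 1) ∧
  (∀ i ∈ I, ∀ j ∈ I, i ≠ j → 4 ≤ |(i : ℤ) - (j : ℤ)|) ∧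
  (({1, r - 1} : Finset ℕ) ∩ I).card ≤ 1

/-- B-type sets: two residues `a`, `a+g` mod `4g`. -/
def bset (r g a : ℕ) : Finset ℕ :=
  (Finset.Icc 1 (r-1)).filter (fun x => x % (4*g) = a ∨ x % (4*g) = (a+g) % (4*g))

/-- C-type sets: residue `s` mod 4 in blocks `≡ a` mod 6, residue `t` mod 4 in
blocks `≡ a+δ` mod 6, block length `2^(j+2)`. -/
def cset (r j s t a δ : ℕ) : Finset ℕ :=
  (Finset.Icc 1 (r-1)).filter (fun x =>
    (x % 4 = s ∧ (x / 2^(j+2)) % 6 = a) ∨ (x % 4 = t ∧ (x / 2^(j+2)) % 6 = (a + δ) % 6))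

def baseFam (r : ℕ) : List (Finset ℕ) :=
  ((List.range 4).flatMap fun g' => (List.range (4*(g'+4))).map fun a => bset r (g'+4) a)
  ++ ((List.range (Nat.log 2 r)).flatMap fun j =>
      (List.range 4).flatMap fun s =>
      (List.range 4).flatMap fun t =>
      (List.range 6).flatMap fun a =>
      (List.range 3).map fun δ' => cset r j s t a (δ'+2))

def fam (r : ℕ) : List (Finset ℕ) :=
  (baseFam r).flatMap fun X => [X.erase 1, X.erase (r-1)]

lemma abs_ge4 {x y : ℕ} (h : x + 4 ≤ y ∨ y + 4 ≤ x) : 4 ≤ |(x:ℤ) - (y:ℤ)| := by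
  rw [le_abs]; omega

lemma bset_sep {r g a : ℕ} (hg1 : 4 ≤ g) (hg2 : g ≤ 7) :
    ∀ x ∈ bset r g a, ∀ y ∈ bset r g a, x ≠ y → 4 ≤ |(x:ℤ) - (y:ℤ)| := by
  intro x hx y hy hne
  simp only [bset, Finset.mem_filter] at hx hy
  apply abs_ge4
  interval_cases g <;> omega

lemma cset_sep {r j s t a δ : ℕ} (hδ1 : 2 ≤ δ) (hδ2 : δ ≤ 4) :
    ∀ x ∈ cset r j s t a δ, ∀ y ∈ cset r j s t a δ, x ≠ y → 4 ≤ |(x:ℤ) - (y:ℤ)| := by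
  have hL : 4 ≤ 2^(j+2) := by
    calc (4:ℕ) = 2^2 := rfl
    _ ≤ 2^(j+2) := Nat.pow_le_pow_right (by norm_num) (by omega)
  have hL0 : 0 < 2^(j+2) := by omega
  -- cross separation helper
  have cross : ∀ x y : ℕ, (x / 2^(j+2)) % 6 = a → (y / 2^(j+2)) % 6 = (a + δ) % 6 →
      4 ≤ |(x:ℤ) - (y:ℤ)| := by
    intro x y hx hy
    set L := 2^(j+2) with hLdef
    have hk : x / L + 2 ≤ y / L ∨ y / L + 2 ≤ x / L := by omega
    have h1 := Nat.div_add_mod x L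
    have h2 := Nat.div_add_mod y L
    have h3 : x % L < L := Nat.mod_lt _ hL0
    have h4 : y % L < L := Nat.mod_lt _ hL0
    apply abs_ge4
    rcases hk with hk | hk
    · left
      have hmul := Nat.mul_le_mul_left L hk
      rw [Nat.mul_add] at hmul
      generalize L * (x / L) = A at h1 hmul
      generalize L * (y / L) = B at h2 hmul
      generalize x % L = u at h1 h3
      generalize y % L = v at h2 h4
      omega
    · right
      have hmul := Nat.mul_le_mul_left L hk
      rw [Nat.mul_add] at hmul
      generalize L * (y / L) = B at h2 hmul
      generalize L * (x / L) = A at h1 hmul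
      generalize x % L = u at h1 h3
      generalize y % L = v at h2 h4
      omega
  intro x hx y hy hne
  simp only [cset, Finset.mem_filter] at hx hy
  rcases hx.2 with ⟨hx4, hxb⟩ | ⟨hx4, hxb⟩ <;> rcases hy.2 with ⟨hy4, hyb⟩ | ⟨hy4, hyb⟩
  · apply abs_ge4; omega
  · exact cross x y hxb hyb
  · rw [abs_sub_comm]; exact cross y x hyb hxb
  · apply abs_ge4; omega

lemma mem_baseFam_sep {r : ℕ} {X : Finset ℕ} (hX : X ∈ baseFam r) :
    X ⊆ Finset.Icc 1 (r-1) ∧ ∀ x ∈ X, ∀ y ∈ X, x ≠ y → 4 ≤ |(x:ℤ) - (y:ℤ)| := by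
  simp only [baseFam, List.mem_append, List.mem_flatMap, List.mem_map, List.mem_range] at hX
  rcases hX with ⟨g', hg', a, ha, rfl⟩ | ⟨j, hj, s, hs, t, ht, a, ha, δ', hδ', rfl⟩
  · exact ⟨Finset.filter_subset _ _, bset_sep (by omega) (by omega)⟩
  · exact ⟨Finset.filter_subset _ _, cset_sep (by omega) (by omega)⟩

lemma card_pair_inter_erase_left (S : Finset ℕ) (u v : ℕ) :
    (({u, v} : Finset ℕ) ∩ S.erase u).card ≤ 1 := by
  rw [Finset.card_le_one]
  intro x hx y hy
  simp only [Finset.mem_inter, Finset.mem_insert, Finset.mem_singleton,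
    Finset.mem_erase] at hx hy
  rcases hx with ⟨hx1 | hx1, hx2, _⟩ <;> rcases hy with ⟨hy1 | hy1, hy2, _⟩ <;> omega

lemma card_pair_inter_erase_right (S : Finset ℕ) (u v : ℕ) :
    (({u, v} : Finset ℕ) ∩ S.erase v).card ≤ 1 := by
  rw [Finset.card_le_one]
  intro x hx y hy
  simp only [Finset.mem_inter, Finset.mem_insert, Finset.mem_singleton,
    Finset.mem_erase] at hx hy
  rcases hx with ⟨hx1 | hx1, hx2, _⟩ <;> rcases hy with ⟨hy1 | hy1, hy2, _⟩ <;> omega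

lemma sparse_of_mem_fam {r : ℕ} {X : Finset ℕ} (hX : X ∈ fam r) : SparseSet r X := by
  simp only [fam, List.mem_flatMap, List.mem_cons, List.mem_singleton,
    List.not_mem_nil, or_false] at hX
  obtain ⟨Y, hY, hXY⟩ := hX
  obtain ⟨hsub, hsep⟩ := mem_baseFam_sep hY
  rcases hXY with rfl | rfl
  · refine ⟨(Finset.erase_subset _ _).trans hsub, ?_, card_pair_inter_erase_left Y 1 (r-1)⟩
    intro x hx y hy
    exact hsep x (Finset.mem_of_mem_erase hx) y (Finset.mem_of_mem_erase hy)
  · refine ⟨(Finset.erase_subset _ _).trans hsub, ?_, card_pair_inter_erase_right Y 1 (r-1)⟩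
    intro x hx y hy
    exact hsep x (Finset.mem_of_mem_erase hx) y (Finset.mem_of_mem_erase hy)

lemma div_bounds {L x y : ℕ} (hL : 0 < L) (h2L : x + 2*L ≤ y) (h4L : y < x + 4*L) :
    x / L + 2 ≤ y / L ∧ y / L ≤ x / L + 4 := by
  constructor
  · have h1 : (x + 2*L)/L = x/L + 2 := Nat.add_mul_div_right x 2 hL
    have h2 := Nat.div_le_div_right (c := L) h2L
    rw [h1] at h2
    exact h2
  · have h5 : y < (x/L + 5) * L := by
      have h1 := Nat.div_add_mod x L
      have h3 : x % L < L := Nat.mod_lt _ hL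
      have he : (x/L + 5) * L = L * (x/L) + L*5 := by ring
      rw [he]
      generalize L * (x / L) = A at h1 ⊢
      generalize x % L = u at h1 h3
      omega
    have h6 := (Nat.div_lt_iff_lt_mul hL).2 h5
    exact Nat.lt_succ_iff.mp h6

/-- Coverage for ordered pairs: any `x < y` with `y - x ≥ 4` in the range is covered
by some base set. -/
lemma cover_base {r x y : ℕ} (hr : 2 ≤ r) (hx1 : 1 ≤ x) (hyr : y ≤ r - 1)
    (hxy : x + 4 ≤ y) : ∃ Y ∈ baseFam r, x ∈ Y ∧ y ∈ Y := by
  have hxr : x ≤ r - 1 := by omega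
  have hxI : x ∈ Finset.Icc 1 (r-1) := by simp; omega
  have hyI : y ∈ Finset.Icc 1 (r-1) := by simp; omega
  set g := y - x with hgdef
  have hg4 : 4 ≤ g := by omega
  by_cases hg7 : g ≤ 7
  · -- B-type set
    refine ⟨bset r g (x % (4*g)), ?_, ?_, ?_⟩
    · simp only [baseFam, List.mem_append, List.mem_flatMap, List.mem_map, List.mem_range]
      left
      refine ⟨g - 4, by omega, x % (4*g), ?_⟩
      rw [show g - 4 + 4 = g by omega]
      exact ⟨Nat.mod_lt _ (by omega), rfl⟩
    · simp only [bset, Finset.mem_filter]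
      exact ⟨hxI, Or.inl (by simp)⟩
    · simp only [bset, Finset.mem_filter]
      refine ⟨hyI, Or.inr ?_⟩
      have hyg : y = x + g := by omega
      interval_cases g <;> omega
  · -- C-type set
    have hg8 : 8 ≤ g := by omega
    set k := Nat.log 2 g with hkdef
    have hk3 : 3 ≤ k := by
      rw [hkdef]
      rw [Nat.le_log_iff_pow_le (by norm_num) (by omega)]
      norm_num; omega
    set L := 2^(k-1) with hLdef
    have hL4 : 4 ≤ L := by
      calc (4:ℕ) = 2^2 := rfl
      _ ≤ 2^(k-1) := Nat.pow_le_pow_right (by norm_num) (by omega)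
    have hL0 : 0 < L := by omega
    have h2L : 2 * L ≤ g := by
      have := Nat.pow_log_le_self 2 (show g ≠ 0 by omega)
      calc 2 * L = 2^k := by rw [hLdef, ← pow_succ']; congr 1; omega
      _ ≤ g := this
    have h4L : g < 4 * L := by
      have := Nat.lt_pow_succ_log_self (show (1:ℕ) < 2 by norm_num) g
      calc g < 2^(k+1) := this
      _ = 4 * L := by rw [hLdef]; rw [show k + 1 = (k-1) + 2 by omega]; ring
    set j := k - 3 with hjdef
    have hjL : 2^(j+2) = L := by rw [hLdef]; congr 1; omega
    have hjr : j < Nat.log 2 r := by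
      have hgr : g ≤ r := by omega
      have := Nat.log_mono_right (b := 2) hgr
      have hr1 : 1 ≤ Nat.log 2 r := Nat.log_pos (by norm_num) hr
      omega
    obtain ⟨hk2, hk4⟩ := div_bounds hL0 (show x + 2*L ≤ y by omega) (show y < x + 4*L by omega)
    set kx := x / L with hkx
    set ky := y / L with hky
    set δ := ky - kx with hδ
    refine ⟨cset r j (x % 4) (y % 4) (kx % 6) δ, ?_, ?_, ?_⟩
    · simp only [baseFam, List.mem_append, List.mem_flatMap, List.mem_map, List.mem_range]
      right
      exact ⟨j, hjr, x % 4, by omega, y % 4, by omega, kx % 6, by omega,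
        δ - 2, by omega, by rw [show δ - 2 + 2 = δ by omega]⟩
    · simp only [cset, Finset.mem_filter, hjL]
      exact ⟨hxI, Or.inl ⟨by trivial, by trivial⟩⟩
    · simp only [cset, Finset.mem_filter, hjL]
      refine ⟨hyI, Or.inr ⟨by trivial, ?_⟩⟩
      omega

lemma flatMap_const_length {α β : Type*} (l : List α) (f : α → List β) (c : ℕ)
    (h : ∀ a ∈ l, (f a).length = c) : (l.flatMap f).length = l.length * c := by
  induction l with
  | nil => simp
  | cons a l ih =>
    simp only [List.flatMap_cons, List.length_append, List.length_cons]
    rw [h a (by simp), ih (fun b hb => h b (by simp [hb]))]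
    ring

lemma baseFam_length (r : ℕ) : (baseFam r).length = 88 + 288 * Nat.log 2 r := by
  rw [baseFam, List.length_append]
  have hA : ((List.range 4).flatMap fun g' =>
      (List.range (4*(g'+4))).map fun a => bset r (g'+4) a).length = 88 := by
    simp [List.length_flatMap, List.range_succ]
  have hC : ((List.range (Nat.log 2 r)).flatMap fun j =>
      (List.range 4).flatMap fun s =>
      (List.range 4).flatMap fun t =>
      (List.range 6).flatMap fun a =>
      (List.range 3).map fun δ' => cset r j s t a (δ'+2)).length
      = Nat.log 2 r * 288 := by
    rw [flatMap_const_length _ _ 288]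
    · simp
    · intro j _
      rw [flatMap_const_length _ _ 72]
      · simp
      intro s _
      rw [flatMap_const_length _ _ 18]
      · simp
      intro t _
      rw [flatMap_const_length _ _ 3]
      · simp
      intro a _
      simp
  rw [hA, hC]
  ring

lemma fam_length (r : ℕ) : (fam r).length = 176 + 576 * Nat.log 2 r := by
  rw [fam]
  rw [flatMap_const_length (baseFam r) (fun X => [X.erase 1, X.erase (r-1)]) 2 (fun X _ => rfl), baseFam_length]
  ring

theorem stmt10 : ∃ c : ℝ, 0 < c ∧
    ∀ r : ℕ, 2 ≤ r →
      ∃ (ℓ : ℕ) (I : Fin ℓ → Finset ℕ),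
        (ℓ : ℝ) ≤ c * Real.log r ∧
        (∀ t, SparseSet r (I t)) ∧
        ∀ x y : ℕ, x ∈ Finset.Icc 1 (r - 1) → y ∈ Finset.Icc 1 (r - 1) →
          4 ≤ |(x : ℤ) - (y : ℤ)| → ({x, y} : Finset ℕ) ≠ {1, r - 1} →
          ∃ t, x ∈ I t ∧ y ∈ I t := by
  refine ⟨2000, by norm_num, ?_⟩
  intro r hr
  refine ⟨(fam r).length, fun t => (fam r).get t, ?_, ?_, ?_⟩
  · -- length bound
    rw [fam_length]
    have hlog2 : (0.6931471803 : ℝ) < Real.log 2 := Real.log_two_gt_d9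
    set K := Nat.log 2 r with hK
    have h1 : (2:ℝ)^K ≤ r := by
      have := Nat.pow_log_le_self 2 (show r ≠ 0 by omega)
      exact_mod_cast this
    have h2 : (K:ℝ) * Real.log 2 ≤ Real.log r := by
      calc (K:ℝ) * Real.log 2 = Real.log ((2:ℝ)^K) := by rw [Real.log_pow]
      _ ≤ Real.log r := Real.log_le_log (by positivity) h1
    have h3 : Real.log 2 ≤ Real.log r := by
      apply Real.log_le_log (by norm_num)
      exact_mod_cast hr
    push_cast
    nlinarith [Nat.cast_nonneg (α := ℝ) K]
  · intro t
    exact sparse_of_mem_fam (List.get_mem _ t)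
  · intro x y hx hy habs hne
    simp only [Finset.mem_Icc] at hx hy
    have h4 : x + 4 ≤ y ∨ y + 4 ≤ x := by rw [le_abs] at habs; omega
    have hxy : x ≠ y := by omega
    -- get a base set containing both
    have hbase : ∃ Y ∈ baseFam r, x ∈ Y ∧ y ∈ Y := by
      rcases h4 with h4 | h4
      · exact cover_base hr hx.1 hy.2 h4
      · obtain ⟨Y, h1, h2, h3⟩ := cover_base hr hy.1 hx.2 h4
        exact ⟨Y, h1, h3, h2⟩
    obtain ⟨Y, hY, hxY, hyY⟩ := hbase
    -- choose which element to erase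
    have hchoice : (x ≠ 1 ∧ y ≠ 1) ∨ (x ≠ r - 1 ∧ y ≠ r - 1) := by
      rcases eq_or_ne x 1 with rfl | hxone
      · right
        have hy1 : y ≠ r - 1 := by rintro rfl; exact hne rfl
        exact ⟨by intro h; omega, hy1⟩
      · rcases eq_or_ne y 1 with rfl | hyone
        · right
          have hx2 : x ≠ r - 1 := by rintro rfl; exact hne (Finset.pair_comm _ _)
          exact ⟨hx2, by intro h; omega⟩
        · left; exact ⟨hxone, hyone⟩
    rcases hchoice with ⟨hx1, hy1⟩ | ⟨hx1, hy1⟩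
    · have hmem : Y.erase 1 ∈ fam r := by
        simp only [fam, List.mem_flatMap]
        exact ⟨Y, hY, by simp⟩
      obtain ⟨t, ht⟩ := List.mem_iff_get.1 hmem
      refine ⟨t, ?_, ?_⟩
      · show x ∈ (fam r).get t
        rw [ht]; exact Finset.mem_erase.2 ⟨hx1, hxY⟩
      · show y ∈ (fam r).get t
        rw [ht]; exact Finset.mem_erase.2 ⟨hy1, hyY⟩
    · have hmem : Y.erase (r-1) ∈ fam r := by
        simp only [fam, List.mem_flatMap]
        exact ⟨Y, hY, by simp⟩
      obtain ⟨t, ht⟩ := List.mem_iff_get.1 hmem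
      refine ⟨t, ?_, ?_⟩
      · show x ∈ (fam r).get t
        rw [ht]; exact Finset.mem_erase.2 ⟨hx1, hxY⟩
      · show y ∈ (fam r).get t
        rw [ht]; exact Finset.mem_erase.2 ⟨hy1, hyY⟩
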